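/- Let A ∈ ℂ^{n×n} be non-Hermitian positive definite (Hermitian part H = (A+A*)/2 ≻ 0) and let A = M - N be a splitting with N Hermitian such that M* + N is positive definite (its Hermitian part is Hermitian positive definite). Then ρ(M^{-1}N) < 1. -/

import Mathlib

open Matrix
open scoped ComplexOrder

private lemma quad_conj' {n : ℕ} (B : Matrix (Fin n) (Fin n) ℂ) (v : Fin n → ℂ) :
    star v ⬝ᵥ (Bᴴ *ᵥ v) = star (star v ⬝ᵥ (B *ᵥ v)) := by
  rw [star_dotProduct, star_mulVec, conjTranspose_conjTranspose, ← dotProduct_mulVec]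

private lemma re_pos_of_posdef' {n : ℕ} {B : Matrix (Fin n) (Fin n) ℂ}
    (h : ((1 / 2 : ℂ) • (B + Bᴴ)).PosDef) {v : Fin n → ℂ} (hv : v ≠ 0) :
    0 < (star v ⬝ᵥ (B *ᵥ v)).re := by
  have hp := h.dotProduct_mulVec_pos hv
  set b := star v ⬝ᵥ (B *ᵥ v) with hb
  have hval : star v ⬝ᵥ (((1 / 2 : ℂ) • (B + Bᴴ)) *ᵥ v) = (b.re : ℂ) := by
    rw [smul_mulVec, add_mulVec, dotProduct_smul, dotProduct_add, quad_conj', ← hb]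
    rw [Complex.star_def, Complex.add_conj]
    simp [smul_eq_mul]
  rw [hval] at hp
  exact_mod_cast hp

private lemma key_ineq' {x y p q : ℝ} (h1 : p*y + q*x = 0)
    (h2 : 0 < x + (p*x - q*y)) (h3 : 0 < x - (p*x - q*y)) :
    p^2 + q^2 < 1 := by
  nlinarith [mul_pos h2 h3, sq_nonneg (q*x + p*y), sq_nonneg (p*x - q*y), sq_nonneg y, sq_nonneg x]

theorem stmt10 {n : ℕ} (A M N : Matrix (Fin n) (Fin n) ℂ)
    (hA : ((1 / 2 : ℂ) • (A + Aᴴ)).PosDef)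
    (hM : IsUnit M) (hMN : A = M - N) (hN : N.IsHermitian)
    (hP : ((1 / 2 : ℂ) • ((Mᴴ + N) + (Mᴴ + N)ᴴ)).PosDef) :
    spectralRadius ℂ (M⁻¹ * N) < 1 := by
  have key : ∀ k ∈ spectrum ℂ (M⁻¹ * N), (‖k‖₊ : ENNReal) < 1 := by
    intro k hk
    -- extract eigenvector
    rw [spectrum.mem_iff, Matrix.isUnit_iff_isUnit_det, isUnit_iff_ne_zero, not_ne_iff] at hk
    obtain ⟨v, hv, hv0⟩ := (Matrix.exists_mulVec_eq_zero_iff).2 hk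
    have hMdet : IsUnit M.det := (Matrix.isUnit_iff_isUnit_det M).1 hM
    have heig1 : (M⁻¹ * N) *ᵥ v = k • v := by
      rw [Matrix.sub_mulVec, sub_eq_zero] at hv0
      rw [← hv0, Algebra.algebraMap_eq_smul_one, Matrix.smul_mulVec, Matrix.one_mulVec]
    have heig : N *ᵥ v = k • (M *ᵥ v) := by
      calc N *ᵥ v = (M * (M⁻¹ * N)) *ᵥ v := by
            rw [← Matrix.mul_assoc, Matrix.mul_nonsing_inv M hMdet, Matrix.one_mul]
        _ = M *ᵥ ((M⁻¹ * N) *ᵥ v) := by rw [Matrix.mulVec_mulVec]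
        _ = k • (M *ᵥ v) := by rw [heig1, Matrix.mulVec_smul]
    set m := star v ⬝ᵥ (M *ᵥ v) with hm
    have hnn : star v ⬝ᵥ (N *ᵥ v) = k * m := by
      rw [heig, dotProduct_smul, smul_eq_mul]
    -- N Hermitian : (k*m).im = 0
    have h1 : (k * m).im = 0 := by
      have : star (k * m) = k * m := by
        rw [← hnn, ← quad_conj' N v, hN.eq]
      rw [Complex.star_def] at this
      exact (Complex.conj_eq_iff_im).1 this
    -- A positivity : 0 < (m - k*m).re
    have h3 : 0 < (m - k * m).re := by
      have := re_pos_of_posdef' hA hv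
      rwa [hMN, Matrix.sub_mulVec, dotProduct_sub, hnn, ← hm] at this
    -- Mᴴ + N positivity : 0 < (star m + k*m).re
    have h2 : 0 < ((starRingEnd ℂ) m + k * m).re := by
      have := re_pos_of_posdef' hP hv
      rwa [Matrix.add_mulVec, dotProduct_add, hnn, quad_conj' M v, ← hm, Complex.star_def]
        at this
    have hlt : k.re ^ 2 + k.im ^ 2 < 1 := by
      apply key_ineq' (x := m.re) (y := m.im) (p := k.re) (q := k.im)
      · simpa [Complex.mul_im] using h1
      · simpa [Complex.add_re, Complex.conj_re, Complex.mul_re] using h2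
      · simpa [Complex.sub_re, Complex.mul_re] using h3
    have hnormlt : ‖k‖ < 1 := by
      have hsq : ‖k‖ ^ 2 = k.re ^ 2 + k.im ^ 2 := by
        rw [Complex.sq_norm, Complex.normSq_apply]; ring
      nlinarith [norm_nonneg k]
    rw [show (1 : ENNReal) = ((1 : NNReal) : ENNReal) from rfl, ENNReal.coe_lt_coe,
      ← NNReal.coe_lt_coe, coe_nnnorm]
    exact hnormlt
  show (⨆ k ∈ spectrum ℂ (M⁻¹ * N), (‖k‖₊ : ENNReal)) < 1
  rw [← sSup_image]
  rcases (spectrum ℂ (M⁻¹ * N)).eq_empty_or_nonempty with h | h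
  · simp [h]
  · rw [Set.Finite.csSup_lt_iff ((Matrix.finite_spectrum _).image _) (h.image _)]
    rintro x ⟨k, hk, rfl⟩
    exact key k hk
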